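/- Fix ρ > 0, σx² > 0, σw² > 0 with σw² < ρ·σx² (high SNR condition). For a nonzero training vector x ∈ ℂ^B, the zeroth-order symbol-estimate MSE with random channel evaluated at the MVU filter equals σw²·(σx² + ‖x‖²)/(ρ·‖x‖² + σw²), and this quantity is strictly decreasing in the training energy: for nonzero training vectors x, x' ∈ ℂ^B with ‖x‖ < ‖x'‖ one has σw²·(σx² + ‖x'‖²)/(ρ·‖x'‖² + σw²) < σw²·(σx² + ‖x‖²)/(ρ·‖x‖² + σw²). Hence [MSE_x^rc(ZF)]_0 under the MVU estimator depends on the training only through ‖x‖² and is minimized by spending the full training energy. -/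

import Mathlib

open MeasureTheory

/-- `φ(f) = fᴴ x = Σᵢ conj(fᵢ)·xᵢ`. -/
noncomputable def phi {B : ℕ} (x f : Fin B → ℂ) : ℂ :=
  ∑ i, (starRingEnd ℂ) (f i) * x i

/-- Squared Euclidean norm `‖f‖² = Σᵢ |fᵢ|²`. -/
noncomputable def nsq {B : ℕ} (f : Fin B → ℂ) : ℝ :=
  ∑ i, Complex.normSq (f i)

/-- Zeroth-order symbol-estimate MSE of the ZF equalizer, random channel with
prior second moment `ρ = E[|h|²]`, for the training vector `x`. -/
noncomputable def Mrc {B : ℕ} (σx2 σw2 ρ : ℝ) (x f : Fin B → ℂ) : ℝ :=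
  (σx2 * (ρ * Complex.normSq (phi x f - 1) + σw2 * nsq f) + σw2) /
    (ρ * Complex.normSq (phi x f) + σw2 * nsq f)

/-- The MVU channel-estimating filter `f_MVU = x / ‖x‖²` associated with `x`. -/
noncomputable def fMVU {B : ℕ} (x : Fin B → ℂ) : Fin B → ℂ :=
  fun i => x i / (nsq x : ℂ)

lemma nsq_nonneg {B : ℕ} (x : Fin B → ℂ) : 0 ≤ nsq x :=
  Finset.sum_nonneg fun i _ => Complex.normSq_nonneg _

lemma nsq_pos {B : ℕ} {x : Fin B → ℂ} (hx : x ≠ 0) : 0 < nsq x := by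
  rcases (nsq_nonneg x).lt_or_eq with h | h
  · exact h
  · exfalso
    apply hx
    funext i
    have := (Finset.sum_eq_zero_iff_of_nonneg
      (fun i _ => Complex.normSq_nonneg (x i))).mp h.symm i (Finset.mem_univ i)
    simpa using Complex.normSq_eq_zero.mp this

lemma phi_mvu {B : ℕ} {x : Fin B → ℂ} (hx : x ≠ 0) : phi x (fMVU x) = 1 := by
  have hn : (nsq x : ℂ) ≠ 0 := by
    exact_mod_cast (nsq_pos hx).ne'
  unfold phi fMVU
  have : ∀ i : Fin B, (starRingEnd ℂ) (x i / (nsq x : ℂ)) * x i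
      = (Complex.normSq (x i) : ℂ) / (nsq x : ℂ) := by
    intro i
    rw [map_div₀, Complex.conj_ofReal, div_mul_eq_mul_div,
      ← Complex.normSq_eq_conj_mul_self]
  rw [Finset.sum_congr rfl (fun i _ => this i), ← Finset.sum_div]
  rw [show (∑ i, (Complex.normSq (x i) : ℂ)) = ((nsq x : ℝ) : ℂ) by
    push_cast [nsq]; rfl]
  exact div_self hn

lemma nsq_mvu {B : ℕ} {x : Fin B → ℂ} (hx : x ≠ 0) : nsq (fMVU x) = 1 / nsq x := by
  have hn : nsq x ≠ 0 := (nsq_pos hx).ne'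
  unfold nsq fMVU
  have : ∀ i : Fin B, Complex.normSq (x i / (nsq x : ℂ))
      = Complex.normSq (x i) / (nsq x)^2 := by
    intro i
    rw [Complex.normSq_div, Complex.normSq_ofReal, sq]
  rw [Finset.sum_congr rfl (fun i _ => this i), ← Finset.sum_div,
    show (∑ i, Complex.normSq (x i)) = nsq x from rfl]
  field_simp

/-- Under the MVU estimator, `[MSE_x^rc(ZF)]₀` equals
`σw²(σx² + ‖x‖²)/(ρ‖x‖² + σw²)`, which depends on the training only through the
training energy `‖x‖²`, and (at high SNR, `σw² < ρσx²`) it is strictly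
decreasing in the training energy: it is minimized by spending the full
training energy. -/
theorem mvu_rc_mse_depends_only_on_training_energy
    (B : ℕ) (hB : 1 ≤ B) (σx2 σw2 ρ : ℝ)
    (hσx : 0 < σx2) (hσw : 0 < σw2) (hρ : 0 < ρ)
    (hSNR : σw2 < ρ * σx2) :
    (∀ x : Fin B → ℂ, x ≠ 0 →
      Mrc σx2 σw2 ρ x (fMVU x) = σw2 * (σx2 + nsq x) / (ρ * nsq x + σw2)) ∧
    (∀ x x' : Fin B → ℂ, x ≠ 0 → x' ≠ 0 →
      Real.sqrt (nsq x) < Real.sqrt (nsq x') →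
      σw2 * (σx2 + nsq x') / (ρ * nsq x' + σw2) <
        σw2 * (σx2 + nsq x) / (ρ * nsq x + σw2)) := by
  constructor
  · intro x hx
    have hn : 0 < nsq x := nsq_pos hx
    unfold Mrc
    rw [phi_mvu hx, nsq_mvu hx]
    simp only [sub_self, Complex.normSq_zero, Complex.normSq_one]
    rw [div_eq_div_iff]
    · field_simp
      ring
    · have : 0 < σw2 * (1 / nsq x) := by positivity
      nlinarith
    · nlinarith
  · intro x x' hx hx' hlt
    have ha : 0 < nsq x := nsq_pos hx
    have hb : 0 < nsq x' := nsq_pos hx'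
    have hab : nsq x < nsq x' := by
      nlinarith [Real.sq_sqrt (nsq_nonneg x), Real.sq_sqrt (nsq_nonneg x'),
        Real.sqrt_nonneg (nsq x), Real.sqrt_nonneg (nsq x'), hlt]
    rw [div_lt_div_iff₀ (by nlinarith) (by nlinarith)]
    nlinarith [mul_pos hσw (sub_pos.mpr hab)]
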